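/- Let κ be a field of characteristic p ≥ 5 and B = κ[[a,b,c]]/(a² − b³), identified with the subring κ[[t²,t³,c]] of κ[[t,c]] via a = t³, b = t². Let I' = (a^p, b^{2p}, c^p) ⊆ B. Then the quotient B/I' has length 3p² as a κ-vector space, with basis given by the classes of t^i c^j for i ∈ {0,2,3,…,3p−1,3p+1} and 0 ≤ j ≤ p−1. -/

import Mathlib

set_option synthInstance.maxHeartbeats 1000000
set_option maxHeartbeats 1000000

noncomputable section

open MvPowerSeries

/-- The ideal `(a² − b³)` in `κ[[a,b,c]]`, where `a = X 0`, `b = X 1`, `c = X 2`. -/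
def relB (κ : Type*) [Field κ] : Ideal (MvPowerSeries (Fin 3) κ) :=
  Ideal.span {(MvPowerSeries.X 0) ^ 2 - (MvPowerSeries.X 1) ^ 3}

/-- The ring `B = κ[[a,b,c]]/(a² − b³)`, i.e. `κ[[t²,t³,c]]` via `a = t³`, `b = t²`. -/
abbrev Bring (κ : Type*) [Field κ] := MvPowerSeries (Fin 3) κ ⧸ relB κ

/-- The Frobenius-power ideal `I' = (a^p, b^{2p}, c^p) ⊆ B`. -/
def Iprime (κ : Type*) [Field κ] (p : ℕ) : Ideal (Bring κ) :=
  Ideal.span {Ideal.Quotient.mk (relB κ) ((MvPowerSeries.X 0) ^ p),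
    Ideal.Quotient.mk (relB κ) ((MvPowerSeries.X 1) ^ (2 * p)),
    Ideal.Quotient.mk (relB κ) ((MvPowerSeries.X 2) ^ p)}

instance instAlgBring (κ : Type*) [Field κ] : Algebra κ (Bring κ) :=
  Ideal.Quotient.algebra κ

instance instAlgQuot (κ : Type*) [Field κ] (p : ℕ) : Algebra κ (Bring κ ⧸ Iprime κ p) :=
  Ideal.Quotient.algebra κ

/-- The class of `t^i c^j` in `B/I'`; under the identification `a = t³`, `b = t²` one has
`t^{2m} = b^m` and `t^{2m+3} = a·b^m`, so for `i ≠ 1` the monomial `t^i` is `b^{i/2}` when `i`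
is even and `a·b^{(i-3)/2}` when `i` is odd. -/
def basisElem (κ : Type*) [Field κ] (p i j : ℕ) : Bring κ ⧸ Iprime κ p :=
  Ideal.Quotient.mk (Iprime κ p) (Ideal.Quotient.mk (relB κ)
    ((if Even i then (MvPowerSeries.X 1 : MvPowerSeries (Fin 3) κ) ^ (i / 2)
      else MvPowerSeries.X 0 * (MvPowerSeries.X 1) ^ ((i - 3) / 2)) *
      (MvPowerSeries.X 2) ^ j))

namespace FPC

open Finsupp Finset

variable {κ : Type*} [Field κ]

/-! ### Exponent-vector bookkeeping -/

def e (a b c : ℕ) : Fin 3 →₀ ℕ :=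
  Finsupp.single 0 a + Finsupp.single 1 b + Finsupp.single 2 c

@[simp] lemma e_apply0 (a b c : ℕ) : e a b c 0 = a := by simp [e, Finsupp.single_apply]
@[simp] lemma e_apply1 (a b c : ℕ) : e a b c 1 = b := by simp [e, Finsupp.single_apply]
@[simp] lemma e_apply2 (a b c : ℕ) : e a b c 2 = c := by simp [e, Finsupp.single_apply]

lemma e_eta (n : Fin 3 →₀ ℕ) : e (n 0) (n 1) (n 2) = n := by
  ext i; fin_cases i <;> simp

lemma e_inj {a b c a' b' c' : ℕ} (h : e a b c = e a' b' c') : a = a' ∧ b = b' ∧ c = c' := by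
  refine ⟨?_, ?_, ?_⟩
  · have := congrArg (fun f : Fin 3 →₀ ℕ => f 0) h; simpa using this
  · have := congrArg (fun f : Fin 3 →₀ ℕ => f 1) h; simpa using this
  · have := congrArg (fun f : Fin 3 →₀ ℕ => f 2) h; simpa using this

lemma e_add (a b c a' b' c' : ℕ) : e a b c + e a' b' c' = e (a+a') (b+b') (c+c') := by
  ext i; fin_cases i <;> simp [e, Finsupp.single_apply]

lemma single0_eq (k : ℕ) : Finsupp.single (0 : Fin 3) k = e k 0 0 := by simp [e]
lemma single1_eq (k : ℕ) : Finsupp.single (1 : Fin 3) k = e 0 k 0 := by simp [e]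
lemma single2_eq (k : ℕ) : Finsupp.single (2 : Fin 3) k = e 0 0 k := by simp [e]

lemma single0_le_e {k a b c : ℕ} : Finsupp.single (0:Fin 3) k ≤ e a b c ↔ k ≤ a := by
  rw [Finsupp.single_le_iff]; simp
lemma single1_le_e {k a b c : ℕ} : Finsupp.single (1:Fin 3) k ≤ e a b c ↔ k ≤ b := by
  rw [Finsupp.single_le_iff]; simp
lemma single2_le_e {k a b c : ℕ} : Finsupp.single (2:Fin 3) k ≤ e a b c ↔ k ≤ c := by
  rw [Finsupp.single_le_iff]; simp

lemma e_sub_single0 (a b c k : ℕ) : e a b c - Finsupp.single (0:Fin 3) k = e (a-k) b c := by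
  ext i; fin_cases i <;> simp [Finsupp.tsub_apply, Finsupp.single_apply]
lemma e_sub_single1 (a b c k : ℕ) : e a b c - Finsupp.single (1:Fin 3) k = e a (b-k) c := by
  ext i; fin_cases i <;> simp [Finsupp.tsub_apply, Finsupp.single_apply]
lemma e_sub_single2 (a b c k : ℕ) : e a b c - Finsupp.single (2:Fin 3) k = e a b (c-k) := by
  ext i; fin_cases i <;> simp [Finsupp.tsub_apply, Finsupp.single_apply]

/-! ### Monomials and the defining ideal -/

def M (a b c : ℕ) : MvPowerSeries (Fin 3) κ := monomial (e a b c) 1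

lemma M_mul (a b c a' b' c' : ℕ) :
    (M a b c : MvPowerSeries (Fin 3) κ) * M a' b' c' = M (a+a') (b+b') (c+c') := by
  simp [M, monomial_mul_monomial, e_add]

lemma M_congr {a b c a' b' c' : ℕ} (h1 : a = a') (h2 : b = b') (h3 : c = c') :
    (M a b c : MvPowerSeries (Fin 3) κ) = M a' b' c' := by
  subst h1; subst h2; subst h3; rfl

lemma X0_pow (n : ℕ) : (X 0 : MvPowerSeries (Fin 3) κ) ^ n = M n 0 0 := by
  rw [X_pow_eq, single0_eq, M]
lemma X1_pow (n : ℕ) : (X 1 : MvPowerSeries (Fin 3) κ) ^ n = M 0 n 0 := by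
  rw [X_pow_eq, single1_eq, M]
lemma X2_pow (n : ℕ) : (X 2 : MvPowerSeries (Fin 3) κ) ^ n = M 0 0 n := by
  rw [X_pow_eq, single2_eq, M]
lemma X0_eq : (X 0 : MvPowerSeries (Fin 3) κ) = M 1 0 0 := by
  rw [← pow_one (X 0 : MvPowerSeries (Fin 3) κ), X0_pow]

def fB : MvPowerSeries (Fin 3) κ := (X 0) ^ 2 - (X 1) ^ 3

lemma fB_eq : (fB : MvPowerSeries (Fin 3) κ) = M 2 0 0 - M 0 3 0 := by
  rw [fB, X0_pow, X1_pow]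

lemma relB_eq : relB κ = Ideal.span {(fB : MvPowerSeries (Fin 3) κ)} := rfl

variable (κ) in
def Jfull (p : ℕ) : Ideal (MvPowerSeries (Fin 3) κ) :=
  Ideal.span {fB, (X 0) ^ p, (X 1) ^ (2 * p), (X 2) ^ p}

variable (p : ℕ)

lemma fB_mem : (fB : MvPowerSeries (Fin 3) κ) ∈ Jfull κ p :=
  Ideal.subset_span (by simp)
lemma X0p_mem : ((X 0) ^ p : MvPowerSeries (Fin 3) κ) ∈ Jfull κ p :=
  Ideal.subset_span (by simp)
lemma X1p_mem : ((X 1) ^ (2*p) : MvPowerSeries (Fin 3) κ) ∈ Jfull κ p :=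
  Ideal.subset_span (by simp)
lemma X2p_mem : ((X 2) ^ p : MvPowerSeries (Fin 3) κ) ∈ Jfull κ p :=
  Ideal.subset_span (by simp)

lemma spanf_le : Ideal.span {(fB : MvPowerSeries (Fin 3) κ)} ≤ Jfull κ p := by
  rw [Ideal.span_le]; intro x hx; simp at hx; subst hx; exact fB_mem p

/-- the basic rewriting: `X0^(r+2k) X1^b X2^c ≡ X0^r X1^(b+3k) X2^c` mod `(f)` -/
lemma red (k : ℕ) : ∀ (r b c : ℕ),
    (M (r + 2*k) b c - M r (b + 3*k) c : MvPowerSeries (Fin 3) κ) ∈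
      Ideal.span {(fB : MvPowerSeries (Fin 3) κ)} := by
  induction k with
  | zero => intro r b c; simp
  | succ k ih =>
    intro r b c
    have h1 : (M (r + 2*k) (b+3) c - M r ((b+3) + 3*k) c : MvPowerSeries (Fin 3) κ) ∈
        Ideal.span {(fB : MvPowerSeries (Fin 3) κ)} := ih r (b+3) c
    have h2 : (M (r + 2*(k+1)) b c - M (r + 2*k) (b+3) c : MvPowerSeries (Fin 3) κ) ∈
        Ideal.span {(fB : MvPowerSeries (Fin 3) κ)} := by
      have e1 : r + 2*(k+1) = (r+2*k) + 2 := by ring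
      have : (M ((r + 2*k) + 2) b c - M (r + 2*k) (b+3) c : MvPowerSeries (Fin 3) κ)
          = M (r + 2*k) b c * fB := by
        rw [fB_eq, mul_sub, M_mul, M_mul]
        norm_num
      rw [e1, this]
      exact Ideal.mul_mem_left _ _ (Ideal.subset_span rfl)
    have := Submodule.add_mem _ h2 h1
    have h3 : (b+3) + 3*k = b + 3*(k+1) := by ring
    rw [h3] at this
    simpa using this

lemma red_mem (a b c : ℕ) :
    (M a b c - M (a % 2) (b + 3*(a/2)) c : MvPowerSeries (Fin 3) κ) ∈
      Ideal.span {(fB : MvPowerSeries (Fin 3) κ)} := by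
  have h := red (κ := κ) (a/2) (a % 2) b c
  have h2 : a % 2 + 2*(a/2) = a := by omega
  rw [h2] at h
  exact h

/-- `X0 · X1^((3p-3)/2) ∈ Jfull`, for odd `p` -/
lemma m1 (hp : p % 2 = 1) : (M 1 ((3*p-3)/2) 0 : MvPowerSeries (Fin 3) κ) ∈ Jfull κ p := by
  have h0 : ((X 0)^p : MvPowerSeries (Fin 3) κ) = M p 0 0 := X0_pow p
  have hr : (M p 0 0 - M 1 ((3*p-3)/2) 0 : MvPowerSeries (Fin 3) κ) ∈ Jfull κ p := by
    have := red_mem (κ := κ) p 0 0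
    have h2 : 0 + 3*(p/2) = (3*p-3)/2 := by omega
    rw [hp, h2] at this
    exact spanf_le p this
  have := Submodule.sub_mem _ (h0 ▸ X0p_mem p) hr
  simpa using this

/-- `X1^((3p+3)/2) ∈ Jfull`, for odd `p` -/
lemma m2 (hp : p % 2 = 1) : (M 0 ((3*p+3)/2) 0 : MvPowerSeries (Fin 3) κ) ∈ Jfull κ p := by
  have h1 : (M 2 ((3*p-3)/2) 0 : MvPowerSeries (Fin 3) κ) ∈ Jfull κ p := by
    have : (M 2 ((3*p-3)/2) 0 : MvPowerSeries (Fin 3) κ) = M 1 0 0 * M 1 ((3*p-3)/2) 0 := by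
      rw [M_mul]; norm_num
    rw [this]
    exact Ideal.mul_mem_left _ _ (m1 p hp)
  have h2 : (M 2 ((3*p-3)/2) 0 - M 0 ((3*p-3)/2 + 3) 0 : MvPowerSeries (Fin 3) κ) ∈
      Jfull κ p := by
    have := red (κ := κ) 1 0 ((3*p-3)/2) 0
    simp only [Nat.mul_one] at this
    have h3 : (0:ℕ) + 2*1 = 2 := by norm_num
    have h4 : (3*p-3)/2 + 3*1 = (3*p-3)/2 + 3 := by ring
    rw [h3, h4] at this
    exact spanf_le p this
  have := Submodule.sub_mem _ h1 h2
  have h5 : (3*p-3)/2 + 3 = (3*p+3)/2 := by omega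
  rw [h5] at this
  simpa using this

/-! ### Truncations -/

def truncAt (d : Fin 3 →₀ ℕ) (F : MvPowerSeries (Fin 3) κ) : MvPowerSeries (Fin 3) κ :=
  fun n => if d ≤ n then 0 else coeff n F

def shiftBy (d : Fin 3 →₀ ℕ) (F : MvPowerSeries (Fin 3) κ) : MvPowerSeries (Fin 3) κ :=
  fun n => coeff (n + d) F

@[simp] lemma coeff_truncAt (d n : Fin 3 →₀ ℕ) (F : MvPowerSeries (Fin 3) κ) :
    coeff n (truncAt d F) = if d ≤ n then 0 else coeff n F := rfl

@[simp] lemma coeff_shiftBy (d n : Fin 3 →₀ ℕ) (F : MvPowerSeries (Fin 3) κ) :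
    coeff n (shiftBy d F) = coeff (n + d) F := rfl

lemma trunc_decomp (d : Fin 3 →₀ ℕ) (F : MvPowerSeries (Fin 3) κ) :
    F = monomial d 1 * shiftBy d F + truncAt d F := by
  ext n
  rw [map_add, coeff_monomial_mul, coeff_truncAt]
  by_cases h : d ≤ n
  · simp only [h, if_pos, if_neg, one_mul, coeff_shiftBy, add_zero, if_true]
    rw [tsub_add_cancel_of_le h]
  · rw [if_neg h, if_neg h, zero_add]

def boxT (F : MvPowerSeries (Fin 3) κ) : MvPowerSeries (Fin 3) κ :=
  truncAt (Finsupp.single 1 (2*p)) (truncAt (Finsupp.single 0 p) (truncAt (Finsupp.single 2 p) F))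

lemma coeff_boxT (n : Fin 3 →₀ ℕ) (F : MvPowerSeries (Fin 3) κ) :
    coeff n (boxT p F) = if n 0 < p ∧ n 1 < 2*p ∧ n 2 < p then coeff n F else 0 := by
  simp only [boxT, coeff_truncAt, Finsupp.single_le_iff]
  split_ifs <;> try rfl
  all_goals omega

/-- the box truncation written as a finite sum of monomials -/
lemma boxT_eq_sum (F : MvPowerSeries (Fin 3) κ) :
    boxT p F = ∑ x ∈ (range p ×ˢ range (2*p) ×ˢ range p),
      (coeff (e x.1 x.2.1 x.2.2) F) • M x.1 x.2.1 x.2.2 := by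
  ext n
  rw [coeff_boxT, map_sum]
  have hterm : ∀ a b c : ℕ,
      coeff n ((coeff (e a b c) F) • (M a b c : MvPowerSeries (Fin 3) κ))
      = if n = e a b c then coeff (e a b c) F else 0 := by
    intro a b c
    rw [LinearMap.map_smul, M, coeff_monomial, smul_eq_mul]
    split_ifs <;> simp
  rw [Finset.sum_congr rfl (fun x _ => hterm x.1 x.2.1 x.2.2)]
  by_cases hn : n 0 < p ∧ n 1 < 2*p ∧ n 2 < p
  · rw [if_pos hn]
    rw [Finset.sum_eq_single_of_mem (n 0, n 1, n 2)]
    · rw [if_pos (e_eta n).symm, e_eta]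
    · simp only [Finset.mem_product, Finset.mem_range]
      exact ⟨hn.1, hn.2.1, hn.2.2⟩
    · rintro ⟨a, b, c⟩ _ hx
      rw [if_neg]
      intro h
      apply hx
      have h0 := congrArg (fun f : Fin 3 →₀ ℕ => f 0) h.symm
      have h1 := congrArg (fun f : Fin 3 →₀ ℕ => f 1) h.symm
      have h2 := congrArg (fun f : Fin 3 →₀ ℕ => f 2) h.symm
      simp only [e_apply0, e_apply1, e_apply2] at h0 h1 h2
      simp [Prod.ext_iff, h0, h1, h2]
  · rw [if_neg hn]
    symm
    apply Finset.sum_eq_zero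
    rintro ⟨a, b, c⟩ hx
    rw [if_neg]
    intro h
    apply hn
    rw [h]
    simp only [Finset.mem_product, Finset.mem_range] at hx
    simp only [e_apply0, e_apply1, e_apply2]
    exact ⟨hx.1, hx.2.1, hx.2.2⟩

/-! ### The coefficient functionals -/

def lam (i j : ℕ) : MvPowerSeries (Fin 3) κ →ₗ[κ] κ :=
  ∑ a ∈ Finset.range (i+1),
    if 3*a ≤ i ∧ (i - 3*a) % 2 = 0 then coeff (e a ((i-3*a)/2) j) else 0

lemma lam_apply (i j : ℕ) (F : MvPowerSeries (Fin 3) κ) :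
    lam i j F = ∑ a ∈ Finset.range (i+1),
      if 3*a ≤ i ∧ (i - 3*a) % 2 = 0 then coeff (e a ((i-3*a)/2) j) F else 0 := by
  rw [lam, LinearMap.sum_apply]
  refine Finset.sum_congr rfl fun a _ => ?_
  rw [apply_ite (fun L : MvPowerSeries (Fin 3) κ →ₗ[κ] κ => L F)]
  simp

lemma lam_mul_X0p {i j : ℕ} (hi : i ≤ 3*p+1) (hi3 : i ≠ 3*p) (r : MvPowerSeries (Fin 3) κ) :
    lam i j (r * (X 0) ^ p) = 0 := by
  rw [lam_apply]
  apply Finset.sum_eq_zero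
  intro a _
  split_ifs with h
  · rw [X_pow_eq, coeff_mul_monomial, if_neg]
    rw [single0_le_e]
    omega
  · rfl

lemma lam_mul_X1p {i j : ℕ} (hp5 : 2 ≤ p) (hi : i ≤ 3*p+1) (r : MvPowerSeries (Fin 3) κ) :
    lam i j (r * (X 1) ^ (2*p)) = 0 := by
  rw [lam_apply]
  apply Finset.sum_eq_zero
  intro a _
  split_ifs with h
  · rw [X_pow_eq, coeff_mul_monomial, if_neg]
    rw [single1_le_e]
    omega
  · rfl

lemma lam_mul_X2p {i j : ℕ} (hj : j < p) (r : MvPowerSeries (Fin 3) κ) :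
    lam i j (r * (X 2) ^ p) = 0 := by
  rw [lam_apply]
  apply Finset.sum_eq_zero
  intro a _
  split_ifs with h
  · rw [X_pow_eq, coeff_mul_monomial, if_neg]
    rw [single2_le_e]
    omega
  · rfl

lemma lam_mul_fB {i j : ℕ} (r : MvPowerSeries (Fin 3) κ) :
    lam i j (r * fB) = 0 := by
  have hsub : r * fB = r * (X 0)^2 - r * (X 1)^3 := by rw [fB, mul_sub]
  rw [hsub, map_sub]
  set G : ℕ → κ := fun a =>
    if 3*a+6 ≤ i ∧ (i - 3*a) % 2 = 0 then coeff (e a ((i-6-3*a)/2) j) r else 0 with hG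
  have h1 : lam i j (r * (X 1)^3) = ∑ a ∈ Finset.range (i+1), G a := by
    rw [lam_apply]
    refine Finset.sum_congr rfl fun a _ => ?_
    simp only [hG]
    by_cases h : 3*a+6 ≤ i ∧ (i - 3*a) % 2 = 0
    · rw [if_pos h, if_pos (show 3*a ≤ i ∧ (i-3*a) % 2 = 0 by omega)]
      rw [X_pow_eq, coeff_mul_monomial, if_pos (by rw [single1_le_e]; omega),
        e_sub_single1, mul_one, show (i-3*a)/2 - 3 = (i-6-3*a)/2 by omega]
    · rw [if_neg h]
      split_ifs with h2
      · rw [X_pow_eq, coeff_mul_monomial, if_neg (by rw [single1_le_e]; omega)]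
      · rfl
  have h0 : lam i j (r * (X 0)^2) = ∑ a ∈ Finset.range (i+1), G a := by
    rw [lam_apply]
    set H : ℕ → κ := fun a =>
      if 3*a ≤ i ∧ (i - 3*a) % 2 = 0 ∧ 2 ≤ a then coeff (e (a-2) ((i-3*a)/2) j) r else 0
      with hH
    have hterm : ∀ a, (if 3*a ≤ i ∧ (i - 3*a) % 2 = 0
        then coeff (e a ((i-3*a)/2) j) (r * (X 0)^2) else 0) = H a := by
      intro a
      simp only [hH]
      by_cases h : 3*a ≤ i ∧ (i - 3*a) % 2 = 0
      · rw [if_pos h, X_pow_eq, coeff_mul_monomial]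
        by_cases h2 : 2 ≤ a
        · rw [if_pos (by rw [single0_le_e]; exact h2), e_sub_single0, mul_one,
            if_pos ⟨h.1, h.2, h2⟩]
        · rw [if_neg (by rw [single0_le_e]; omega), if_neg (by tauto)]
      · rw [if_neg h, if_neg (by tauto)]
    rw [Finset.sum_congr rfl fun a _ => hterm a]
    have hext : ∑ a ∈ Finset.range (i+1), H a = ∑ a ∈ Finset.range (i+3), H a := by
      apply Finset.sum_subset
      · exact Finset.range_subset_range.mpr (by omega)
      · intro a ha hna
        simp only [hH]
        rw [if_neg]
        simp only [Finset.mem_range] at hna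
        omega
    rw [hext, Finset.sum_range_succ', Finset.sum_range_succ']
    have hH0 : H 0 = 0 := by simp only [hH]; rw [if_neg (by omega)]
    have hH1 : H 1 = 0 := by simp only [hH]; rw [if_neg (by omega)]
    have hshift : ∀ a, H (a + 1 + 1) = G a := by
      intro a
      simp only [hH, hG]
      by_cases h : 3*a+6 ≤ i ∧ (i - 3*a) % 2 = 0
      · rw [if_pos h, if_pos (by omega)]
        rw [show a+1+1-2 = a by omega, show (i-3*(a+1+1))/2 = (i-6-3*a)/2 by omega]
      · rw [if_neg h, if_neg (by omega)]
    rw [hH1, hH0, add_zero, add_zero]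
    exact Finset.sum_congr rfl fun a _ => hshift a
  rw [h0, h1, sub_self]

/-- the delta property -/
lemma lam_M (i j a b c : ℕ) :
    lam i j (M a b c : MvPowerSeries (Fin 3) κ) = if 3*a + 2*b = i ∧ j = c then 1 else 0 := by
  rw [lam_apply, M]
  have hterm : ∀ a' : ℕ, (if 3*a' ≤ i ∧ (i - 3*a') % 2 = 0
      then coeff (e a' ((i-3*a')/2) j) (monomial (e a b c) 1) else 0)
      = if 3*a' ≤ i ∧ (i - 3*a') % 2 = 0 then
          (if e a' ((i-3*a')/2) j = e a b c then (1:κ) else 0) else 0 := by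
    intro a'
    by_cases h : 3*a' ≤ i ∧ (i - 3*a') % 2 = 0
    · rw [if_pos h, if_pos h, coeff_monomial]
    · rw [if_neg h, if_neg h]
  rw [Finset.sum_congr rfl fun a' _ => hterm a']
  by_cases hC : 3*a + 2*b = i ∧ j = c
  · rw [if_pos hC]
    rw [Finset.sum_eq_single_of_mem a]
    · rw [if_pos (by omega), if_pos]
      congr 1 <;> omega
    · rw [Finset.mem_range]; omega
    · intro a' _ ha'
      split_ifs with h h2
      · exact absurd (e_inj h2).1 ha'
      · rfl
      · rfl
  · rw [if_neg hC]
    apply Finset.sum_eq_zero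
    intro a' _
    split_ifs with h h2
    · exfalso
      obtain ⟨h1', h2', h3'⟩ := e_inj h2
      omega
    · rfl
    · rfl

lemma lam_Jfull {i j : ℕ} (hp5 : 2 ≤ p) (hi : i ≤ 3*p+1) (hi3 : i ≠ 3*p) (hj : j < p)
    {F : MvPowerSeries (Fin 3) κ} (hF : F ∈ Jfull κ p) : lam i j F = 0 := by
  have main : ∀ r : MvPowerSeries (Fin 3) κ, lam i j (r * F) = 0 := by
    refine Submodule.span_induction ?_ ?_ ?_ ?_ hF
    · intro x hx r
      simp only [Set.mem_insert_iff, Set.mem_singleton_iff] at hx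
      rcases hx with rfl | rfl | rfl | rfl
      · exact lam_mul_fB r
      · exact lam_mul_X0p p hi hi3 r
      · exact lam_mul_X1p p hp5 hi r
      · exact lam_mul_X2p p hj r
    · intro r; rw [mul_zero, map_zero]
    · intro x y _ _ hx hy r
      rw [mul_add, map_add, hx, hy, add_zero]
    · intro s x _ hx r
      rw [smul_eq_mul, ← mul_assoc, hx]
  have := main 1
  rwa [one_mul] at this

/-! ### The quotient map and its kernel -/

variable (κ) in
def πa : MvPowerSeries (Fin 3) κ →ₐ[κ] (Bring κ ⧸ Iprime κ p) :=
  (Ideal.Quotient.mkₐ κ (Iprime κ p)).comp (Ideal.Quotient.mkₐ κ (relB κ))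

lemma πa_apply (F : MvPowerSeries (Fin 3) κ) :
    πa κ p F = Ideal.Quotient.mk (Iprime κ p) (Ideal.Quotient.mk (relB κ) F) := rfl

lemma πa_surjective : Function.Surjective (πa κ p) := by
  intro y
  obtain ⟨z, hz⟩ := Ideal.Quotient.mk_surjective y
  obtain ⟨F, hF⟩ := Ideal.Quotient.mk_surjective z
  exact ⟨F, by rw [πa_apply, hF, hz]⟩

lemma Jfull_ker {F : MvPowerSeries (Fin 3) κ} (hF : F ∈ Jfull κ p) : πa κ p F = 0 := by
  have hle : Jfull κ p ≤ RingHom.ker (πa κ p).toRingHom := by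
    rw [Jfull, Ideal.span_le]
    intro x hx
    simp only [Set.mem_insert_iff, Set.mem_singleton_iff] at hx
    rcases hx with rfl | rfl | rfl | rfl
    · show πa κ p fB = 0
      rw [πa_apply]
      have : Ideal.Quotient.mk (relB κ) fB = 0 := by
        rw [Ideal.Quotient.eq_zero_iff_mem, relB_eq]
        exact Ideal.subset_span rfl
      rw [this, map_zero]
    · show πa κ p ((X 0)^p) = 0
      rw [πa_apply, Ideal.Quotient.eq_zero_iff_mem, Iprime]
      exact Ideal.subset_span (by simp)
    · show πa κ p ((X 1)^(2*p)) = 0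
      rw [πa_apply, Ideal.Quotient.eq_zero_iff_mem, Iprime]
      exact Ideal.subset_span (by simp)
    · show πa κ p ((X 2)^p) = 0
      rw [πa_apply, Ideal.Quotient.eq_zero_iff_mem, Iprime]
      exact Ideal.subset_span (by simp)
  exact hle hF

lemma Iprime_eq : Iprime κ p = Ideal.map (Ideal.Quotient.mk (relB κ))
    (Ideal.span {((X 0 : MvPowerSeries (Fin 3) κ))^p, (X 1)^(2*p), (X 2)^p}) := by
  rw [Ideal.map_span, Set.image_insert_eq, Set.image_insert_eq, Set.image_singleton, Iprime]

lemma mem_Jfull_of {F : MvPowerSeries (Fin 3) κ} (h : πa κ p F = 0) : F ∈ Jfull κ p := by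
  rw [πa_apply, Ideal.Quotient.eq_zero_iff_mem, Iprime_eq] at h
  obtain ⟨x, hx, hxF⟩ :=
    (Ideal.mem_map_iff_of_surjective _ Ideal.Quotient.mk_surjective).mp h
  have h2 : F - x ∈ relB κ := by
    rw [← Ideal.Quotient.mk_eq_mk_iff_sub_mem]
    exact hxF.symm
  have hx' : x ∈ Jfull κ p := by
    refine Ideal.span_le.mpr ?_ hx
    intro z hz
    simp only [Set.mem_insert_iff, Set.mem_singleton_iff] at hz
    rcases hz with rfl | rfl | rfl
    · exact X0p_mem p
    · exact X1p_mem p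
    · exact X2p_mem p
  have h3 : F - x ∈ Jfull κ p := by
    rw [relB_eq] at h2
    exact spanf_le p h2
  have : F = x + (F - x) := by ring
  rw [this]
  exact add_mem hx' h3

/-! ### Representatives of the basis elements -/

def Erep (i j : ℕ) : MvPowerSeries (Fin 3) κ :=
  (if Even i then (X 1 : MvPowerSeries (Fin 3) κ) ^ (i / 2)
    else X 0 * (X 1) ^ ((i - 3) / 2)) * (X 2) ^ j

lemma basisElem_eq (i j : ℕ) : basisElem κ p i j = πa κ p (Erep i j) := rfl

lemma Erep_even {i : ℕ} (h : Even i) (j : ℕ) :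
    (Erep i j : MvPowerSeries (Fin 3) κ) = M 0 (i/2) j := by
  rw [Erep, if_pos h, X1_pow, X2_pow, M_mul]
  norm_num

lemma Erep_odd {i : ℕ} (h : ¬ Even i) (j : ℕ) :
    (Erep i j : MvPowerSeries (Fin 3) κ) = M 1 ((i-3)/2) j := by
  rw [Erep, if_neg h, X0_eq, X1_pow, X2_pow, M_mul, M_mul]
  norm_num

lemma lam_Erep {i j i' j' : ℕ} (h1 : i' ≠ 1) :
    lam i j (Erep i' j' : MvPowerSeries (Fin 3) κ) = if i = i' ∧ j = j' then 1 else 0 := by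
  by_cases he : Even i'
  · rw [Erep_even he, lam_M]
    rw [Nat.even_iff] at he
    apply if_congr _ rfl rfl
    omega
  · rw [Erep_odd he, lam_M]
    rw [Nat.even_iff] at he
    apply if_congr _ rfl rfl
    omega

/-! ### Reduction of box monomials into the span of basis elements -/

lemma πa_red (a b c : ℕ) :
    πa κ p (M a b c) = πa κ p (M (a % 2) (b + 3*(a/2)) c) := by
  have h := spanf_le (κ := κ) p (red_mem a b c)
  have := Jfull_ker p h
  rw [map_sub] at this
  exact sub_eq_zero.mp this

lemma monom_mem_span (hp2 : p % 2 = 1) {a b c : ℕ} (ha : a < p) (hc : c < p) :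
    πa κ p (M a b c) ∈ Submodule.span κ (Set.range
      (fun x : {i : ℕ // i ≤ 3 * p + 1 ∧ i ≠ 1 ∧ i ≠ 3 * p} × Fin p =>
        basisElem κ p x.1.1 x.2.1)) := by
  rw [πa_red]
  rcases Nat.mod_two_eq_zero_or_one a with h2 | h2 <;> rw [h2]
  · -- even case
    by_cases hBle : 2*(b + 3*(a/2)) ≤ 3*p+1
    · have hidx : 2*(b + 3*(a/2)) ≤ 3*p+1 ∧ 2*(b + 3*(a/2)) ≠ 1 ∧ 2*(b + 3*(a/2)) ≠ 3*p := by
        omega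
      have heq : πa κ p (M 0 (b + 3*(a/2)) c) = basisElem κ p (2*(b + 3*(a/2))) c := by
        rw [basisElem_eq, Erep_even ⟨b + 3*(a/2), by omega⟩]
        exact congrArg _ (M_congr rfl (by omega) rfl)
      rw [heq]
      exact Submodule.subset_span ⟨(⟨2*(b + 3*(a/2)), hidx⟩, ⟨c, hc⟩), rfl⟩
    · have hq : (3*p+3)/2 ≤ b + 3*(a/2) := by omega
      have hsplit : (M 0 (b + 3*(a/2)) c : MvPowerSeries (Fin 3) κ)
          = M 0 ((3*p+3)/2) 0 * M 0 ((b + 3*(a/2)) - (3*p+3)/2) c := by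
        rw [M_mul]
        exact M_congr (by omega) (by omega) (by omega)
      have hz : πa κ p (M 0 (b + 3*(a/2)) c) = 0 := by
        apply Jfull_ker
        rw [hsplit]
        exact Ideal.mul_mem_right _ _ (m2 p hp2)
      rw [hz]
      exact Submodule.zero_mem _
  · -- odd case
    by_cases hBle : b + 3*(a/2) < (3*p-3)/2
    · have hidx : 3+2*(b + 3*(a/2)) ≤ 3*p+1 ∧ 3+2*(b + 3*(a/2)) ≠ 1 ∧
          3+2*(b + 3*(a/2)) ≠ 3*p := by omega
      have heq : πa κ p (M 1 (b + 3*(a/2)) c) = basisElem κ p (3+2*(b + 3*(a/2))) c := by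
        rw [basisElem_eq, Erep_odd (by rw [Nat.even_iff]; omega)]
        exact congrArg _ (M_congr rfl (by omega) rfl)
      rw [heq]
      exact Submodule.subset_span ⟨(⟨3+2*(b + 3*(a/2)), hidx⟩, ⟨c, hc⟩), rfl⟩
    · have hq : (3*p-3)/2 ≤ b + 3*(a/2) := by omega
      have hsplit : (M 1 (b + 3*(a/2)) c : MvPowerSeries (Fin 3) κ)
          = M 1 ((3*p-3)/2) 0 * M 0 ((b + 3*(a/2)) - (3*p-3)/2) c := by
        rw [M_mul]
        exact M_congr (by omega) (by omega) (by omega)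
      have hz : πa κ p (M 1 (b + 3*(a/2)) c) = 0 := by
        apply Jfull_ker
        rw [hsplit]
        exact Ideal.mul_mem_right _ _ (m1 p hp2)
      rw [hz]
      exact Submodule.zero_mem _

lemma πa_trunc {d : Fin 3 →₀ ℕ} (hd : (monomial d 1 : MvPowerSeries (Fin 3) κ) ∈ Jfull κ p)
    (F : MvPowerSeries (Fin 3) κ) : πa κ p (truncAt d F) = πa κ p F := by
  have h := trunc_decomp d F
  have h2 : πa κ p F = πa κ p (monomial d 1 * shiftBy d F) + πa κ p (truncAt d F) := by
    nth_rewrite 1 [h]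
    rw [map_add]
  have h3 : πa κ p (monomial d 1 * shiftBy d F) = 0 :=
    Jfull_ker p (Ideal.mul_mem_right _ _ hd)
  rw [h2, h3, zero_add]

lemma πa_boxT (F : MvPowerSeries (Fin 3) κ) : πa κ p (boxT p F) = πa κ p F := by
  rw [boxT]
  rw [πa_trunc p (by rw [← X_pow_eq]; exact X1p_mem p)]
  rw [πa_trunc p (by rw [← X_pow_eq]; exact X0p_mem p)]
  rw [πa_trunc p (by rw [← X_pow_eq]; exact X2p_mem p)]

/-! ### Fintype structure on the index set -/

def idxFintype : Fintype {i : ℕ // i ≤ 3 * p + 1 ∧ i ≠ 1 ∧ i ≠ 3 * p} :=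
  Fintype.ofFinset ((Finset.range (3*p+2)).filter (fun i => i ≤ 3*p+1 ∧ i ≠ 1 ∧ i ≠ 3*p)) <| by
    intro x
    rw [Finset.mem_filter, Finset.mem_range]
    show _ ↔ (x ≤ 3*p+1 ∧ x ≠ 1 ∧ x ≠ 3*p)
    omega

end FPC

/-- Let `κ` be a field of characteristic `p ≥ 5` and
`B = κ[[a,b,c]]/(a² − b³) = κ[[t²,t³,c]]`, `I' = (a^p, b^{2p}, c^p)`.  Then `B/I'` has length
`3p²` as a `κ`-vector space, with basis given by the classes of `t^i c^j` for
`i ∈ {0,2,3,…,3p−1,3p+1}` and `0 ≤ j ≤ p−1`. -/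
theorem frobenius_power_colength (κ : Type*) [Field κ] (p : ℕ) [Fact p.Prime] [CharP κ p]
    (hp : 5 ≤ p) :
    Module.finrank κ (Bring κ ⧸ Iprime κ p) = 3 * p ^ 2 ∧
    LinearIndependent κ
      (fun x : {i : ℕ // i ≤ 3 * p + 1 ∧ i ≠ 1 ∧ i ≠ 3 * p} × Fin p =>
        basisElem κ p x.1.1 x.2.1) ∧
    Submodule.span κ (Set.range
      (fun x : {i : ℕ // i ≤ 3 * p + 1 ∧ i ≠ 1 ∧ i ≠ 3 * p} × Fin p =>
        basisElem κ p x.1.1 x.2.1)) = ⊤ := by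
  classical
  open FPC in
  have hp2 : p % 2 = 1 := by
    have hodd : Odd p := (Fact.out : p.Prime).odd_of_ne_two (by omega)
    exact Nat.odd_iff.mp hodd
  letI := FPC.idxFintype p
  set v : {i : ℕ // i ≤ 3 * p + 1 ∧ i ≠ 1 ∧ i ≠ 3 * p} × Fin p → Bring κ ⧸ Iprime κ p :=
    fun x => basisElem κ p x.1.1 x.2.1 with hv
  -- spanning
  have hspan : Submodule.span κ (Set.range v) = ⊤ := by
    rw [eq_top_iff]
    rintro y -
    obtain ⟨F, rfl⟩ := FPC.πa_surjective (κ := κ) p y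
    rw [← FPC.πa_boxT p F, FPC.boxT_eq_sum p F, map_sum]
    apply Submodule.sum_mem
    rintro ⟨a, b, c⟩ hx
    simp only [Finset.mem_product, Finset.mem_range] at hx
    rw [map_smul]
    apply Submodule.smul_mem
    exact FPC.monom_mem_span p hp2 hx.1 hx.2.2
  -- linear independence
  have hli : LinearIndependent κ v := by
    rw [Fintype.linearIndependent_iff]
    intro g hg x
    set F : MvPowerSeries (Fin 3) κ := ∑ y, g y • FPC.Erep y.1.1 y.2.1 with hF
    have hπF : FPC.πa κ p F = 0 := by
      rw [hF, map_sum]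
      rw [← hg]
      refine Finset.sum_congr rfl fun y _ => ?_
      rw [map_smul, ← FPC.basisElem_eq]
    have hJ : F ∈ FPC.Jfull κ p := FPC.mem_Jfull_of p hπF
    have hlam0 : FPC.lam x.1.1 x.2.1 F = 0 :=
      FPC.lam_Jfull p (by omega) x.1.2.1 x.1.2.2.2 x.2.2 hJ
    have hlamF : FPC.lam x.1.1 x.2.1 F = g x := by
      rw [hF, map_sum]
      have hterm : ∀ y : {i : ℕ // i ≤ 3 * p + 1 ∧ i ≠ 1 ∧ i ≠ 3 * p} × Fin p,
          FPC.lam x.1.1 x.2.1 (g y • FPC.Erep y.1.1 y.2.1) = if x = y then g y else 0 := by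
        intro y
        rw [map_smul, FPC.lam_Erep y.1.2.2.1, smul_eq_mul]
        by_cases hxy : x = y
        · rw [if_pos hxy, if_pos, mul_one]
          rw [hxy]
          exact ⟨rfl, rfl⟩
        · rw [if_neg, if_neg hxy, mul_zero]
          rintro ⟨h1, h2⟩
          apply hxy
          ext
          · exact h1
          · exact h2
      rw [Finset.sum_congr rfl fun y _ => hterm y]
      rw [Finset.sum_ite_eq]
      simp
    rw [hlamF] at hlam0
    exact hlam0
  refine ⟨?_, hli, hspan⟩
  -- dimension count
  have hbasis : Module.Basis ({i : ℕ // i ≤ 3 * p + 1 ∧ i ≠ 1 ∧ i ≠ 3 * p} × Fin p) κ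
      (Bring κ ⧸ Iprime κ p) := Module.Basis.mk hli (by rw [hspan])
  rw [Module.finrank_eq_card_basis hbasis]
  rw [Fintype.card_prod, Fintype.card_fin]
  have hcard : Fintype.card {i : ℕ // i ≤ 3 * p + 1 ∧ i ≠ 1 ∧ i ≠ 3 * p} = 3*p := by
    rw [show (Fintype.card {i : ℕ // i ≤ 3 * p + 1 ∧ i ≠ 1 ∧ i ≠ 3 * p}) =
      ((Finset.range (3*p+2)).filter (fun i => i ≤ 3*p+1 ∧ i ≠ 1 ∧ i ≠ 3*p)).card from
      Fintype.card_ofFinset _ _]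
    have hset : (Finset.range (3*p+2)).filter (fun i => i ≤ 3*p+1 ∧ i ≠ 1 ∧ i ≠ 3*p)
        = (Finset.range (3*p+2)) \ {1, 3*p} := by
      ext x
      simp only [Finset.mem_filter, Finset.mem_range, Finset.mem_sdiff, Finset.mem_insert,
        Finset.mem_singleton]
      omega
    rw [hset, Finset.card_sdiff_of_subset]
    · rw [Finset.card_range]
      rw [Finset.card_insert_of_notMem (by simp; omega), Finset.card_singleton]
      omega
    · intro x hx
      simp only [Finset.mem_insert, Finset.mem_singleton] at hx
      simp only [Finset.mem_range]
      omega
  rw [hcard]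
  ring
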